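/- For every pair of positive integers k and ℓ, χ'_st(C_{3k} □ C_{3ℓ}) = 6. -/

import Mathlib

open SimpleGraph Finset
set_option linter.unusedSectionVars false
set_option linter.unnecessarySeqFocus false

abbrev SV : Type := Fin 3 × Fin 3
def sadj (p q : SV) : Prop :=
  (p.2 = q.2 ∧ (q.1 = p.1 + 1 ∨ p.1 = q.1 + 1)) ∨ (p.1 = q.1 ∧ (q.2 = p.2 + 1 ∨ p.2 = q.2 + 1))
instance sadjDec (p q : SV) : Decidable (sadj p q) := by unfold sadj; infer_instance
def hcol (i j : Fin 3) : Fin 6 := ⟨2 * ((i.val + j.val) % 3), by omega⟩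
def vcol (i j : Fin 3) : Fin 6 := ⟨2 * ((j.val + 2 * i.val) % 3) + 1, by omega⟩
def fc (p q : SV) : Fin 6 :=
  if p.2 = q.2 then (if q.1 = p.1 + 1 then hcol p.1 p.2 else hcol q.1 q.2)
  else (if q.2 = p.2 + 1 then vcol p.1 p.2 else vcol q.1 q.2)
theorem F1 : ∀ p q : SV, fc p q = fc q p := by decide

theorem F4 : ∀ c : Fin 5,
    ((Finset.univ.filter (fun p : Fin 5 × Fin 5 => p.1 < p.2)).filter
      (fun p => c = p.1 ∨ c = p.2)).card = 4 := by decide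

theorem F5 : (Finset.univ.filter (fun p : Fin 5 × Fin 5 => p.1 < p.2)).card = 10 := by decide

theorem F2 : ∀ p q1 q2 : SV, sadj p q1 → sadj p q2 → q1 ≠ q2 → fc p q1 ≠ fc p q2 := by decide

set_option maxHeartbeats 4000000 in
set_option synthInstance.maxHeartbeats 2000000 in
set_option synthInstance.maxSize 2000 in
theorem F3 : ∀ p0 p1 : SV, sadj p0 p1 → ∀ p2 : SV, sadj p1 p2 → p0 ≠ p2 →
    ∀ p3 : SV, sadj p2 p3 → p1 ≠ p3 → ∀ p4 : SV, sadj p3 p4 → p2 ≠ p4 →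
    ∀ x y : Fin 6,
      ¬ ((fc p0 p1 = x ∨ fc p0 p1 = y) ∧ (fc p1 p2 = x ∨ fc p1 p2 = y) ∧
         (fc p2 p3 = x ∨ fc p2 p3 = y) ∧ (fc p3 p4 = x ∨ fc p3 p4 = y)) := by decide

def rmod {n : ℕ} (u : Fin n) : Fin 3 := ⟨u.val % 3, by omega⟩

theorem fin3_aux1 : ∀ a b : Fin 3, a = b + 1 → b = a + 2 := by decide
theorem fin3_aux2 : ∀ a : Fin 3, a + 1 ≠ a + 2 := by decide
theorem fin3_aux3 : ∀ a b : Fin 3, (a = b + 1 ∨ b = a + 1) → a ≠ b := by decide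

theorem nat_succ_mod_inj {n x y : ℕ} (hx : x < n) (hy : y < n)
    (h : (x + 1) % n = (y + 1) % n) : x = y := by
  rcases Nat.lt_or_ge (x + 1) n with h1 | h1 <;> rcases Nat.lt_or_ge (y + 1) n with h2 | h2
  · rw [Nat.mod_eq_of_lt h1, Nat.mod_eq_of_lt h2] at h; omega
  · have : y + 1 = n := by omega
    rw [Nat.mod_eq_of_lt h1, this, Nat.mod_self] at h; omega
  · have : x + 1 = n := by omega
    rw [Nat.mod_eq_of_lt h2, this, Nat.mod_self] at h; omega
  · omega

theorem cyc_adj_proj {k : ℕ} (hk : 1 ≤ k) {u v : Fin (3 * k)}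
    (h : (cycleGraph (3 * k)).Adj u v) :
    (v.val = (u.val + 1) % (3 * k) ∧ rmod v = rmod u + 1) ∨
    (u.val = (v.val + 1) % (3 * k) ∧ rmod u = rmod v + 1) := by
  have hn : 3 ≤ 3 * k := by omega
  haveI : NeZero (3 * k) := ⟨by omega⟩
  rw [cycleGraph_adj'] at h
  have key : ∀ a b : Fin (3 * k), (b - a).val = 1 → b.val = (a.val + 1) % (3 * k) ∧ rmod b = rmod a + 1 := by
    intro a b hab
    have h1 : b - a = (1 : Fin (3 * k)) := by
      apply Fin.ext
      rw [hab, Fin.val_one']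
      exact (Nat.mod_eq_of_lt (by omega)).symm
    have h2 : b = a + 1 := by
      rwa [sub_eq_iff_eq_add'] at h1
    have h3 : b.val = (a.val + 1) % (3 * k) := by
      rw [h2, Fin.add_def, Fin.val_one', Nat.mod_eq_of_lt (show 1 < 3 * k by omega)]
    refine ⟨h3, ?_⟩
    apply Fin.ext
    show b.val % 3 = (a.val % 3 + 1 % 3) % 3
    rw [h3, Nat.mod_mod_of_dvd _ ⟨k, rfl⟩]
    omega
  rcases h with h | h
  · exact Or.inr (key v u h)
  · exact Or.inl (key u v h)

theorem cyc_rmod_ne {k : ℕ} (hk : 1 ≤ k) {v x : Fin (3 * k)}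
    (h : (cycleGraph (3 * k)).Adj v x) : rmod x ≠ rmod v := by
  rcases cyc_adj_proj hk h with ⟨_, h2⟩ | ⟨_, h2⟩
  · exact fin3_aux3 _ _ (Or.inl h2)
  · exact fin3_aux3 _ _ (Or.inr h2)

theorem cyc_loc_inj {k : ℕ} (hk : 1 ≤ k) {v u1 u2 : Fin (3 * k)}
    (h1 : (cycleGraph (3 * k)).Adj v u1) (h2 : (cycleGraph (3 * k)).Adj v u2)
    (hne : u1 ≠ u2) : rmod u1 ≠ rmod u2 := by
  rcases cyc_adj_proj hk h1 with ⟨ha, hb⟩ | ⟨ha, hb⟩ <;>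
    rcases cyc_adj_proj hk h2 with ⟨hc, hd⟩ | ⟨hc, hd⟩
  · exact fun he => hne (Fin.ext (by rw [ha, hc]))
  · rw [hb, fin3_aux1 _ _ hd]; exact fin3_aux2 _
  · rw [fin3_aux1 _ _ hb, hd]; exact fun he => (fin3_aux2 _) he.symm
  · intro he
    exact hne (Fin.ext (nat_succ_mod_inj u1.isLt u2.isLt (by rw [← ha, ← hc])))

section Product
variable {k l : ℕ}

def R (v : Fin (3 * k) × Fin (3 * l)) : SV := (rmod v.1, rmod v.2)

theorem padj_proj (hk : 1 ≤ k) (hl : 1 ≤ l) {v u : Fin (3 * k) × Fin (3 * l)}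
    (h : (cycleGraph (3 * k) □ cycleGraph (3 * l)).Adj v u) : sadj (R v) (R u) := by
  rcases boxProd_adj.mp h with ⟨ha, he⟩ | ⟨ha, he⟩
  · left
    refine ⟨by simp [R, he], ?_⟩
    rcases cyc_adj_proj hk ha with ⟨_, h2⟩ | ⟨_, h2⟩
    · exact Or.inl h2
    · exact Or.inr h2
  · right
    refine ⟨by simp [R, he], ?_⟩
    rcases cyc_adj_proj hl ha with ⟨_, h2⟩ | ⟨_, h2⟩
    · exact Or.inl h2
    · exact Or.inr h2

theorem ploc_inj (hk : 1 ≤ k) (hl : 1 ≤ l) {v u1 u2 : Fin (3 * k) × Fin (3 * l)}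
    (h1 : (cycleGraph (3 * k) □ cycleGraph (3 * l)).Adj v u1)
    (h2 : (cycleGraph (3 * k) □ cycleGraph (3 * l)).Adj v u2)
    (hne : u1 ≠ u2) : R u1 ≠ R u2 := by
  rcases boxProd_adj.mp h1 with ⟨ha1, he1⟩ | ⟨ha1, he1⟩ <;>
    rcases boxProd_adj.mp h2 with ⟨ha2, he2⟩ | ⟨ha2, he2⟩
  · -- both horizontal
    have hfst : u1.1 ≠ u2.1 := by
      intro he; exact hne (Prod.ext he (he1.symm.trans he2))
    intro hR
    exact cyc_loc_inj hk ha1 ha2 hfst (congrArg Prod.fst hR)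
  · -- u1 horizontal, u2 vertical
    intro hR
    have : rmod u1.1 = rmod u2.1 := congrArg Prod.fst hR
    rw [← he2] at this
    exact cyc_rmod_ne hk ha1 this
  · intro hR
    have : rmod u1.2 = rmod u2.2 := congrArg Prod.snd hR
    rw [← he2] at this
    exact cyc_rmod_ne hl ha1 this
  · have hsnd : u1.2 ≠ u2.2 := by
      intro he; exact hne (Prod.ext (he1.symm.trans he2) he)
    intro hR
    exact cyc_loc_inj hl ha1 ha2 hsnd (congrArg Prod.snd hR)

def SC : Sym2 (Fin (3 * k) × Fin (3 * l)) → Fin 6 :=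
  Sym2.lift ⟨fun v u => fc (R v) (R u), fun v u => F1 (R v) (R u)⟩

theorem SC_mk (x y : Fin (3 * k) × Fin (3 * l)) : SC s(x, y) = fc (R x) (R y) := rfl

end Product

/-- A star edge-coloring with `k` colors: a proper edge-coloring (adjacent edges get distinct
colors) such that no path with four edges and no cycle with four edges is bichromatic. -/
def IsStarEdgeColoring {V : Type*} (G : SimpleGraph V) {k : ℕ} (C : Sym2 V → Fin k) : Prop :=
  (∀ e₁ ∈ G.edgeSet, ∀ e₂ ∈ G.edgeSet, e₁ ≠ e₂ → (∃ v, v ∈ e₁ ∧ v ∈ e₂) → C e₁ ≠ C e₂) ∧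
  (∀ (u v : V) (w : G.Walk u v), w.length = 4 → w.IsPath →
    ¬ ∃ a b : Fin k, ∀ e ∈ w.edges, C e = a ∨ C e = b) ∧
  (∀ (u : V) (w : G.Walk u u), w.length = 4 → w.IsCycle →
    ¬ ∃ a b : Fin k, ∀ e ∈ w.edges, C e = a ∨ C e = b)

/-- The star chromatic index: the least `k` admitting a star edge-coloring with `k` colors. -/
noncomputable def starChromaticIndex {V : Type*} (G : SimpleGraph V) : ℕ :=
  sInf {k | ∃ C : Sym2 V → Fin k, IsStarEdgeColoring G C}

section Upper
variable {k l : ℕ}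

theorem SC_star (hk : 1 ≤ k) (hl : 1 ≤ l) :
    IsStarEdgeColoring (cycleGraph (3 * k) □ cycleGraph (3 * l)) (SC (k := k) (l := l)) := by
  refine ⟨?_, ?_, ?_⟩
  · rintro e1 he1 e2 he2 hne ⟨v, hv1, hv2⟩
    obtain ⟨u1, rfl⟩ := Sym2.mem_iff_exists.mp hv1
    obtain ⟨u2, rfl⟩ := Sym2.mem_iff_exists.mp hv2
    have a1 : (cycleGraph (3 * k) □ cycleGraph (3 * l)).Adj v u1 := (SimpleGraph.mem_edgeSet _).mp he1
    have a2 : (cycleGraph (3 * k) □ cycleGraph (3 * l)).Adj v u2 := (SimpleGraph.mem_edgeSet _).mp he2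
    have hu : u1 ≠ u2 := fun h => hne (by rw [h])
    rw [SC_mk, SC_mk]
    exact F2 _ _ _ (padj_proj hk hl a1) (padj_proj hk hl a2) (ploc_inj hk hl a1 a2 hu)
  · intro u v w hlen hp
    cases w with
    | nil => simp at hlen
    | @cons _ b _ h1 w =>
    cases w with
    | nil => simp at hlen
    | @cons _ c _ h2 w =>
    cases w with
    | nil => simp at hlen
    | @cons _ d _ h3 w =>
    cases w with
    | nil => simp at hlen
    | @cons _ e _ h4 w =>
    cases w with
    | @cons _ f _ h5 w => simp at hlen
    | nil =>
      simp [SimpleGraph.Walk.isPath_def, SimpleGraph.Walk.support_cons] at hp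
      rintro ⟨x, y, hxy⟩
      have E : (SimpleGraph.Walk.cons h1 (SimpleGraph.Walk.cons h2 (SimpleGraph.Walk.cons h3
          (SimpleGraph.Walk.cons h4 SimpleGraph.Walk.nil)))).edges
          = [s(u, b), s(b, c), s(c, d), s(d, v)] := rfl
      have m1 := hxy s(u, b) (by rw [E]; simp)
      have m2 := hxy s(b, c) (by rw [E]; simp)
      have m3 := hxy s(c, d) (by rw [E]; simp)
      have m4 := hxy s(d, v) (by rw [E]; simp)
      rw [SC_mk] at m1 m2 m3 m4
      exact F3 (R u) (R b) (padj_proj hk hl h1) (R c) (padj_proj hk hl h2)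
        (ploc_inj hk hl h1.symm h2 (by tauto)) (R d) (padj_proj hk hl h3)
        (ploc_inj hk hl h2.symm h3 (by tauto)) (R v) (padj_proj hk hl h4)
        (ploc_inj hk hl h3.symm h4 (by tauto)) x y ⟨m1, m2, m3, m4⟩
  · intro u w hlen hc
    cases w with
    | nil => simp at hlen
    | @cons _ b _ h1 w =>
    cases w with
    | nil => simp at hlen
    | @cons _ c _ h2 w =>
    cases w with
    | nil => simp at hlen
    | @cons _ d _ h3 w =>
    cases w with
    | nil => simp at hlen
    | @cons _ e _ h4 w =>
    cases w with
    | @cons _ f _ h5 w => simp at hlen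
    | nil =>
      simp [SimpleGraph.Walk.isCycle_def, SimpleGraph.Walk.isTrail_def,
        SimpleGraph.Walk.support_cons] at hc
      rintro ⟨x, y, hxy⟩
      have E : (SimpleGraph.Walk.cons h1 (SimpleGraph.Walk.cons h2 (SimpleGraph.Walk.cons h3
          (SimpleGraph.Walk.cons h4 SimpleGraph.Walk.nil)))).edges
          = [s(u, b), s(b, c), s(c, d), s(d, u)] := rfl
      have m1 := hxy s(u, b) (by rw [E]; simp)
      have m2 := hxy s(b, c) (by rw [E]; simp)
      have m3 := hxy s(c, d) (by rw [E]; simp)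
      have m4 := hxy s(d, u) (by rw [E]; simp)
      rw [SC_mk] at m1 m2 m3 m4
      exact F3 (R u) (R b) (padj_proj hk hl h1) (R c) (padj_proj hk hl h2)
        (ploc_inj hk hl h1.symm h2 (by tauto)) (R d) (padj_proj hk hl h3)
        (ploc_inj hk hl h2.symm h3 (by tauto)) (R u) (padj_proj hk hl h4)
        (ploc_inj hk hl h3.symm h4 (by tauto)) x y ⟨m1, m2, m3, m4⟩

end Upper

section Lower
variable {V : Type*} [Fintype V] [DecidableEq V] (G : SimpleGraph V) [DecidableRel G.Adj]
  (C : Sym2 V → Fin 5)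

def nf (a b : Fin 5) (v : V) : Finset V :=
  (G.neighborFinset v).filter (fun u => C s(v, u) = a ∨ C s(v, u) = b)

def Dab (a b : Fin 5) (v : V) : ℕ := (nf G C a b v).card

theorem mem_nf {a b : Fin 5} {u v : V} :
    u ∈ nf G C a b v ↔ G.Adj v u ∧ (C s(v, u) = a ∨ C s(v, u) = b) := by
  simp [nf, SimpleGraph.mem_neighborFinset]

variable {G C} (hC : IsStarEdgeColoring G C)

include hC in
theorem hprop {v u1 u2 : V} (h1 : G.Adj v u1) (h2 : G.Adj v u2) (hne : u1 ≠ u2) :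
    C s(v, u1) ≠ C s(v, u2) := by
  refine hC.1 _ ((G.mem_edgeSet).mpr h1) _ ((G.mem_edgeSet).mpr h2) ?_ ⟨v, Sym2.mem_mk_left _ _, Sym2.mem_mk_left _ _⟩
  intro h
  exact hne (Sym2.congr_right.mp h)

include hC in
theorem Dab_le_two (a b : Fin 5) (v : V) : Dab G C a b v ≤ 2 := by
  have h := Finset.card_le_card_of_injOn (fun u => C s(v, u))
    (s := nf G C a b v) (t := ({a, b} : Finset (Fin 5)))
    (fun u hu => by
      rcases (mem_nf G C).mp hu with ⟨_, h | h⟩ <;> simp [h])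
    (fun u1 h1 u2 h2 he => by
      by_contra hne
      exact hprop hC ((mem_nf G C).mp h1).1 ((mem_nf G C).mp h2).1 hne he)
  calc Dab G C a b v ≤ ({a, b} : Finset (Fin 5)).card := h
    _ ≤ 2 := card_insert_le _ _ |>.trans (by simp)

theorem mem_nf_symm {a b : Fin 5} {u v : V} (h : u ∈ nf G C a b v) : v ∈ nf G C a b u := by
  rcases (mem_nf G C).mp h with ⟨ha, hc⟩
  exact (mem_nf G C).mpr ⟨ha.symm, by rwa [Sym2.eq_swap]⟩

theorem Dab_pos {a b : Fin 5} {u v : V} (h : u ∈ nf G C a b v) : 1 ≤ Dab G C a b u :=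
  Finset.card_pos.mpr ⟨v, mem_nf_symm h⟩

include hC in
theorem path_contra {t u v w x : V} (a b : Fin 5)
    (atu : G.Adj t u) (auv : G.Adj u v) (avw : G.Adj v w) (awx : G.Adj w x)
    (htu : t ≠ u) (htv : t ≠ v) (htw : t ≠ w)
    (huv : u ≠ v) (huw : u ≠ w) (hux : u ≠ x)
    (hvw : v ≠ w) (hvx : v ≠ x) (hwx : w ≠ x)
    (c1 : C s(t, u) = a ∨ C s(t, u) = b) (c2 : C s(u, v) = a ∨ C s(u, v) = b)
    (c3 : C s(v, w) = a ∨ C s(v, w) = b) (c4 : C s(w, x) = a ∨ C s(w, x) = b) :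
    False := by
  have W : G.Walk t x :=
    SimpleGraph.Walk.cons atu (SimpleGraph.Walk.cons auv
      (SimpleGraph.Walk.cons avw (SimpleGraph.Walk.cons awx SimpleGraph.Walk.nil)))
  by_cases htx : t = x
  · -- cycle case
    subst htx
    refine hC.2.2 t (SimpleGraph.Walk.cons atu (SimpleGraph.Walk.cons auv
      (SimpleGraph.Walk.cons avw (SimpleGraph.Walk.cons awx SimpleGraph.Walk.nil)))) rfl ?_ ?_
    · rw [SimpleGraph.Walk.isCycle_def, SimpleGraph.Walk.isTrail_def]
      refine ⟨?_, by simp, ?_⟩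
      · simp only [SimpleGraph.Walk.edges_cons, SimpleGraph.Walk.edges_nil, List.nodup_cons,
          List.mem_cons, List.not_mem_nil, or_false, List.nodup_nil, and_true, Sym2.eq_iff]
        constructor
        · push_neg
          refine ⟨⟨?_, ?_⟩, ⟨?_, ?_⟩, ⟨?_, ?_⟩⟩ <;> tauto
        constructor
        · push_neg
          refine ⟨⟨?_, ?_⟩, ⟨?_, ?_⟩⟩ <;> tauto
        constructor
        · push_neg
          refine ⟨?_, ?_⟩ <;> tauto
        · trivial
      · simp only [SimpleGraph.Walk.support_cons, SimpleGraph.Walk.support_nil, List.tail_cons,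
          List.nodup_cons, List.mem_cons, List.not_mem_nil, or_false, List.nodup_nil, and_true]
        refine ⟨?_, ?_, ?_⟩ <;> push_neg <;> try tauto
    · exact ⟨a, b, by
        intro e he
        simp only [SimpleGraph.Walk.edges_cons, SimpleGraph.Walk.edges_nil, List.mem_cons,
          List.not_mem_nil, or_false] at he
        rcases he with rfl | rfl | rfl | rfl <;> assumption⟩
  · -- path case
    refine hC.2.1 t x (SimpleGraph.Walk.cons atu (SimpleGraph.Walk.cons auv
      (SimpleGraph.Walk.cons avw (SimpleGraph.Walk.cons awx SimpleGraph.Walk.nil)))) rfl ?_ ?_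
    · rw [SimpleGraph.Walk.isPath_def]
      simp only [SimpleGraph.Walk.support_cons, SimpleGraph.Walk.support_nil, List.nodup_cons,
        List.mem_cons, List.not_mem_nil, or_false, List.nodup_nil, and_true]
      refine ⟨?_, ?_, ?_, ?_⟩ <;> push_neg <;> tauto
    · exact ⟨a, b, by
        intro e he
        simp only [SimpleGraph.Walk.edges_cons, SimpleGraph.Walk.edges_nil, List.mem_cons,
          List.not_mem_nil, or_false] at he
        rcases he with rfl | rfl | rfl | rfl <;> assumption⟩

include hC in
theorem mid_deg1 {a b : Fin 5} {v : V} (h2 : Dab G C a b v = 2) :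
    ∃ u, u ∈ nf G C a b v ∧ Dab G C a b u = 1 := by
  obtain ⟨u, w, huw, hf⟩ := Finset.card_eq_two.mp h2
  have hu : u ∈ nf G C a b v := by rw [hf]; simp
  have hw : w ∈ nf G C a b v := by rw [hf]; simp
  obtain ⟨au, cu⟩ := (mem_nf G C).mp hu
  obtain ⟨aw, cw⟩ := (mem_nf G C).mp hw
  by_cases hDu : Dab G C a b u = 1
  · exact ⟨u, hu, hDu⟩
  by_cases hDw : Dab G C a b w = 1
  · exact ⟨w, hw, hDw⟩
  exfalso
  have hDu2 : Dab G C a b u = 2 := by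
    have h1 := Dab_le_two hC a b u
    have h2 := Dab_pos hu
    omega
  have hDw2 : Dab G C a b w = 2 := by
    have h1 := Dab_le_two hC a b w
    have h2 := Dab_pos hw
    omega
  have other : ∀ z : V, z ∈ nf G C a b v → Dab G C a b z = 2 →
      ∃ t, t ∈ nf G C a b z ∧ t ≠ v := by
    intro z hz hD2
    obtain ⟨x, y, hxy, hfz⟩ := Finset.card_eq_two.mp hD2
    have hv : v ∈ nf G C a b z := mem_nf_symm hz
    rw [hfz] at hv
    simp only [Finset.mem_insert, Finset.mem_singleton] at hv
    rcases hv with rfl | rfl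
    · exact ⟨y, by rw [hfz]; simp, fun h => hxy h.symm⟩
    · exact ⟨x, by rw [hfz]; simp, hxy⟩
  obtain ⟨t, ht, htv⟩ := other u hu hDu2
  obtain ⟨x, hx, hxv⟩ := other w hw hDw2
  obtain ⟨aut, cut⟩ := (mem_nf G C).mp ht
  obtain ⟨awx, cwx⟩ := (mem_nf G C).mp hx
  have hab' : C s(v, u) ≠ C s(v, w) := hprop hC au aw huw
  have hne1 : C s(u, t) ≠ C s(v, u) := by
    have h := hprop hC aut au.symm htv
    rwa [Sym2.eq_swap (a := u) (b := v)] at h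
  have hne2 : C s(w, x) ≠ C s(v, w) := by
    have h := hprop hC awx aw.symm hxv
    rwa [Sym2.eq_swap (a := w) (b := v)] at h
  have hβ : C s(u, t) = C s(v, w) := by
    rcases cut with h | h <;> rcases cw with h' | h' <;> rcases cu with h'' | h'' <;> simp_all
  have hα : C s(w, x) = C s(v, u) := by
    rcases cwx with h | h <;> rcases cu with h' | h' <;> rcases cw with h'' | h'' <;> simp_all
  have htw : t ≠ w := by
    rintro rfl
    have h := hprop hC aut.symm aw.symm au.ne'
    rw [Sym2.eq_swap (a := t) (b := u), Sym2.eq_swap (a := t) (b := v)] at h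
    exact h (hβ.trans rfl)
  have hxu : x ≠ u := by
    rintro rfl
    have h := hprop hC awx.symm au.symm aw.ne'
    rw [Sym2.eq_swap (a := x) (b := w), Sym2.eq_swap (a := x) (b := v)] at h
    exact h (hα.trans rfl)
  refine path_contra hC a b (t := t) (u := u) (v := v) (w := w) (x := x)
    aut.symm au.symm aw awx
    aut.ne' htv htw au.ne' huw (fun h => hxu h.symm) aw.ne (fun h => hxv h.symm) awx.ne
    ?_ ?_ cw cwx
  · rwa [Sym2.eq_swap (a := t) (b := u)]
  · rwa [Sym2.eq_swap (a := u) (b := v)]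

include hC in
theorem card_mid_le {a b : Fin 5} :
    (Finset.univ.filter fun v : V => Dab G C a b v = 2).card ≤
      (Finset.univ.filter fun v : V => Dab G C a b v = 1).card := by
  classical
  have hch : ∀ v : V, Dab G C a b v = 2 → ∃ u, u ∈ nf G C a b v ∧ Dab G C a b u = 1 :=
    fun v hv => mid_deg1 hC hv
  choose f hf1 hf2 using hch
  apply Finset.card_le_card_of_injOn (fun v => if h : Dab G C a b v = 2 then f v h else v)
  · intro v hv
    rw [Finset.mem_coe, Finset.mem_filter] at hv
    beta_reduce
    rw [dif_pos hv.2]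
    exact Finset.mem_filter.mpr ⟨Finset.mem_univ _, hf2 v hv.2⟩
  · intro v1 hv1 v2 hv2 he
    simp only [Finset.coe_filter, Set.mem_setOf_eq] at hv1 hv2
    simp only [dif_pos hv1.2, dif_pos hv2.2] at he
    obtain ⟨z, hz⟩ := Finset.card_eq_one.mp (hf2 v1 hv1.2)
    have m1 : v1 ∈ nf G C a b (f v1 hv1.2) := mem_nf_symm (hf1 v1 hv1.2)
    have m2 : v2 ∈ nf G C a b (f v2 hv2.2) := mem_nf_symm (hf1 v2 hv2.2)
    rw [← he] at m2
    rw [hz] at m1 m2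
    simp only [Finset.mem_singleton] at m1 m2
    rw [m1, m2]

include hC in
theorem pair_bound (a b : Fin 5) :
    2 * (∑ v : V, Dab G C a b v) ≤ 3 * Fintype.card V := by
  classical
  have hle : ∀ v, Dab G C a b v ≤ 2 := Dab_le_two hC a b
  have hpt : ∀ v : V, 2 * Dab G C a b v =
      4 * (if Dab G C a b v = 2 then 1 else 0) + 2 * (if Dab G C a b v = 1 then 1 else 0) := by
    intro v
    have := hle v
    by_cases ha : Dab G C a b v = 2 <;> by_cases hb : Dab G C a b v = 1 <;>
      simp [ha, hb] <;> omega
  have hsum : ∑ v : V, 2 * Dab G C a b v =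
      4 * (Finset.univ.filter fun v : V => Dab G C a b v = 2).card +
      2 * (Finset.univ.filter fun v : V => Dab G C a b v = 1).card := by
    rw [Finset.sum_congr rfl fun v _ => hpt v, Finset.sum_add_distrib,
      ← Finset.mul_sum, ← Finset.mul_sum, Finset.sum_boole, Finset.sum_boole]
    simp
  have hdisj : Disjoint (Finset.univ.filter fun v : V => Dab G C a b v = 2)
      (Finset.univ.filter fun v : V => Dab G C a b v = 1) := by
    rw [Finset.disjoint_left]
    intro v h1 h2
    rw [Finset.mem_filter] at h1 h2
    omega
  have hcard : (Finset.univ.filter fun v : V => Dab G C a b v = 2).card +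
      (Finset.univ.filter fun v : V => Dab G C a b v = 1).card ≤ Fintype.card V := by
    rw [← Finset.card_union_of_disjoint hdisj]
    exact (Finset.card_le_univ _)
  have hMO := card_mid_le hC (a := a) (b := b)
  rw [← Finset.mul_sum, hsum] at *
  omega

include hC in
theorem vertex_sum (hreg : ∀ v : V, ∃ s : Finset V, s.card = 4 ∧ ∀ u, u ∈ s ↔ G.Adj v u) (v : V) :
    ∑ p ∈ Finset.univ.filter (fun p : Fin 5 × Fin 5 => p.1 < p.2), Dab G C p.1 p.2 v = 16 := by
  classical
  have h1 : ∀ a b : Fin 5, Dab G C a b v =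
      ∑ u ∈ G.neighborFinset v, (if C s(v, u) = a ∨ C s(v, u) = b then 1 else 0) := by
    intro a b
    rw [Dab, nf, Finset.card_filter]
  calc ∑ p ∈ Finset.univ.filter (fun p : Fin 5 × Fin 5 => p.1 < p.2), Dab G C p.1 p.2 v
      = ∑ p ∈ Finset.univ.filter (fun p : Fin 5 × Fin 5 => p.1 < p.2),
          ∑ u ∈ G.neighborFinset v, (if C s(v, u) = p.1 ∨ C s(v, u) = p.2 then 1 else 0) := by
        exact Finset.sum_congr rfl fun p _ => h1 p.1 p.2
    _ = ∑ u ∈ G.neighborFinset v,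
          ∑ p ∈ Finset.univ.filter (fun p : Fin 5 × Fin 5 => p.1 < p.2),
            (if C s(v, u) = p.1 ∨ C s(v, u) = p.2 then 1 else 0) := Finset.sum_comm
    _ = ∑ u ∈ G.neighborFinset v, 4 := by
        refine Finset.sum_congr rfl fun u _ => ?_
        rw [← Finset.card_filter]
        exact F4 (C s(v, u))
    _ = 16 := by
        obtain ⟨s, h4, hsmem⟩ := hreg v
        have hns : G.neighborFinset v = s := by
          ext u
          rw [SimpleGraph.mem_neighborFinset]
          exact (hsmem u).symm
        rw [Finset.sum_const, hns, h4]
        rfl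

include hC in
theorem no5 [Nonempty V] (hreg : ∀ v : V, ∃ s : Finset V, s.card = 4 ∧ ∀ u, u ∈ s ↔ G.Adj v u) : False := by
  classical
  set P := Finset.univ.filter (fun p : Fin 5 × Fin 5 => p.1 < p.2) with hPdef
  have total1 : ∑ p ∈ P, ∑ v : V, Dab G C p.1 p.2 v = 16 * Fintype.card V := by
    rw [Finset.sum_comm]
    rw [Finset.sum_congr rfl fun v _ => vertex_sum hC hreg v]
    rw [Finset.sum_const, smul_eq_mul, mul_comm, Finset.card_univ]
  have total2 : ∑ p ∈ P, 2 * ∑ v : V, Dab G C p.1 p.2 v ≤ ∑ p ∈ P, 3 * Fintype.card V :=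
    Finset.sum_le_sum fun p _ => pair_bound hC p.1 p.2
  rw [← Finset.mul_sum, total1, Finset.sum_const, F5, smul_eq_mul] at total2
  have hN : 1 ≤ Fintype.card V := Fintype.card_pos
  omega

end Lower


section Cast

theorem two_colors_extract {m : ℕ} (hm : m ≤ 5) {X : Type*} (g : X → Fin m) (L : List X)
    (hL : L ≠ []) (a b : Fin 5) (hab : ∀ e ∈ L, Fin.castLE hm (g e) = a ∨ Fin.castLE hm (g e) = b) :
    ∃ a' b' : Fin m, ∀ e ∈ L, g e = a' ∨ g e = b' := by
  cases L with
  | nil => simp at hL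
  | cons e0 L =>
    by_cases hall : ∀ e ∈ e0 :: L, g e = g e0
    · exact ⟨g e0, g e0, fun e he => Or.inl (hall e he)⟩
    · push_neg at hall
      obtain ⟨e1, he1, hne⟩ := hall
      refine ⟨g e0, g e1, fun e he => ?_⟩
      have h0 := hab e0 (by simp)
      have h1 := hab e1 he1
      have h2 := hab e he
      have hcast : Fin.castLE hm (g e0) ≠ Fin.castLE hm (g e1) :=
        fun hc => hne ((Fin.castLE_injective hm hc).symm)
      have hor : Fin.castLE hm (g e) = Fin.castLE hm (g e0) ∨
          Fin.castLE hm (g e) = Fin.castLE hm (g e1) := by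
        rcases h0 with h0 | h0 <;> rcases h1 with h1 | h1 <;> rcases h2 with h2 | h2 <;> simp_all
      rcases hor with h | h
      · exact Or.inl (Fin.castLE_injective hm h)
      · exact Or.inr (Fin.castLE_injective hm h)

theorem star_cast {V : Type*} (G : SimpleGraph V) {m : ℕ} (hm : m ≤ 5) (C : Sym2 V → Fin m)
    (h : IsStarEdgeColoring G C) :
    IsStarEdgeColoring G (fun e => Fin.castLE hm (C e)) := by
  refine ⟨?_, ?_, ?_⟩
  · intro e1 he1 e2 he2 hne hsh hc
    exact h.1 e1 he1 e2 he2 hne hsh (Fin.castLE_injective hm hc)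
  · rintro u v w hlen hp ⟨a, b, hab⟩
    have hnil : w.edges ≠ [] := by
      intro hh
      have := w.length_edges
      rw [hh, hlen] at this
      simp at this
    exact h.2.1 u v w hlen hp (two_colors_extract hm C w.edges hnil a b hab)
  · rintro u w hlen hcy ⟨a, b, hab⟩
    have hnil : w.edges ≠ [] := by
      intro hh
      have := w.length_edges
      rw [hh, hlen] at this
      simp at this
    exact h.2.2 u w hlen hcy (two_colors_extract hm C w.edges hnil a b hab)

end Cast

theorem cyc_deg {n : ℕ} (hn : 3 ≤ n) (v : Fin n) : (cycleGraph n).degree v = 2 := by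
  obtain ⟨m, rfl⟩ : ∃ m, n = m + 3 := ⟨n - 3, by omega⟩
  exact cycleGraph_degree_three_le

instance boxProdDecidableRel {α β : Type*} (G : SimpleGraph α) (H : SimpleGraph β)
    [DecidableRel G.Adj] [DecidableRel H.Adj] [DecidableEq α] [DecidableEq β] :
    DecidableRel (G □ H).Adj := fun _ _ => decidable_of_iff _ boxProd_adj.symm

set_option maxHeartbeats 2000000 in
theorem stmt_10 (k l : ℕ) (hk : 1 ≤ k) (hl : 1 ≤ l) :
    starChromaticIndex (cycleGraph (3 * k) □ cycleGraph (3 * l)) = 6 := by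
  haveI hne : Nonempty (Fin (3 * k) × Fin (3 * l)) :=
    ⟨(⟨0, by omega⟩, ⟨0, by omega⟩)⟩
  have hmem : 6 ∈ {n | ∃ C : Sym2 (Fin (3 * k) × Fin (3 * l)) → Fin n,
      IsStarEdgeColoring (cycleGraph (3 * k) □ cycleGraph (3 * l)) C} :=
    ⟨SC, SC_star hk hl⟩
  have hreg : ∀ v : Fin (3 * k) × Fin (3 * l),
      ∃ s : Finset (Fin (3 * k) × Fin (3 * l)), s.card = 4 ∧
        ∀ u, u ∈ s ↔ (cycleGraph (3 * k) □ cycleGraph (3 * l)).Adj v u := by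
    intro v
    refine ⟨(cycleGraph (3 * k) □ cycleGraph (3 * l)).neighborFinset v, ?_,
      fun u => SimpleGraph.mem_neighborFinset _ _ _⟩
    have hd := degree_boxProd (G := cycleGraph (3 * k)) (H := cycleGraph (3 * l)) v
    rw [cyc_deg (by omega) v.1, cyc_deg (by omega) v.2] at hd
    exact hd
  refine le_antisymm (Nat.sInf_le hmem) (le_csInf ⟨6, hmem⟩ ?_)
  rintro m ⟨C, hC⟩
  by_contra hlt
  push_neg at hlt
  have hm : m ≤ 5 := by omega
  exact no5 (star_cast _ hm C hC) hreg
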